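/- Let α > 0, β > 0, λ₁ > 0, κ > 0, r > 1, and suppose α ≥ (4λ₁/κ²)^{1/(r-1)}. Let φ be C² on its maximal interval of existence with φ(0) = α, φ'(0) = β, and φ''(t) + λ₁ φ(t) ≥ (κ²/4)|φ(t)|^r. Then φ blows up in finite time T ≤ ∫_α^∞ [λ₁α² + β² − λ₁ s² + (κ²/(2+2r))(s^{r+1} − α^{r+1})]^{-1/2} ds, i.e. φ cannot be extended as a finite C² function beyond time T. -/

import Mathlib

open Real Set MeasureTheory Filter Topology intervalIntegral

lemma rpow_neg_half_nonneg (x : ℝ) : 0 ≤ x ^ (-(1/2) : ℝ) := by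
  rcases lt_trichotomy x 0 with h | h | h
  · rw [Real.rpow_def_of_neg h, show (-(1/2) : ℝ) * π = -(π/2) by ring, Real.cos_neg,
      Real.cos_pi_div_two, mul_zero]
  · simp [h, Real.zero_rpow (by norm_num : (-(1/2):ℝ) ≠ 0)]
  · exact (Real.rpow_pos_of_pos h _).le

set_option maxHeartbeats 1000000 in
theorem stmt_2 (α β lam κ r tstar : ℝ)
    (hα : 0 < α) (hβ : 0 < β) (hlam : 0 < lam) (hκ : 0 < κ) (hr : 1 < r)
    (hαbig : α ≥ (4 * lam / κ ^ 2) ^ ((1:ℝ) / (r - 1)))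
    (φ φ' φ'' : ℝ → ℝ)
    (hφ0 : φ 0 = α) (hφ'0 : φ' 0 = β)
    (hd1 : ∀ t ∈ Set.Ico (0:ℝ) tstar, HasDerivWithinAt φ (φ' t) (Set.Ico 0 tstar) t)
    (hd2 : ∀ t ∈ Set.Ico (0:ℝ) tstar, HasDerivWithinAt φ' (φ'' t) (Set.Ico 0 tstar) t)
    (hC : ContinuousOn φ'' (Set.Ico 0 tstar))
    (hineq : ∀ t ∈ Set.Ico (0:ℝ) tstar,
      φ'' t + lam * φ t ≥ κ ^ 2 / 4 * |φ t| ^ r) :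
    tstar ≤ ∫ s in Set.Ioi α,
      (lam * α ^ 2 + β ^ 2 - lam * s ^ 2
        + κ ^ 2 / (2 + 2 * r) * (s ^ (r + 1) - α ^ (r + 1))) ^ (-(1/2) : ℝ) := by
  set F : ℝ → ℝ := fun s => lam * α ^ 2 + β ^ 2 - lam * s ^ 2
        + κ ^ 2 / (2 + 2 * r) * (s ^ (r + 1) - α ^ (r + 1)) with hFdef
  set g : ℝ → ℝ := fun s => F s ^ (-(1/2) : ℝ) with hgdef
  show tstar ≤ ∫ s in Set.Ioi α, g s
  have hgnn : ∀ s, 0 ≤ g s := fun s => rpow_neg_half_nonneg _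
  have hInn : (0:ℝ) ≤ ∫ s in Set.Ioi α, g s := integral_nonneg hgnn
  rcases le_or_gt tstar 0 with ht | htpos
  · linarith
  -- basic positivity / exponent facts
  have hr0 : 0 < r - 1 := by linarith
  have hκ2 : (0:ℝ) < κ ^ 2 := by positivity
  have hcpos : (0:ℝ) < κ ^ 2 / (2 + 2 * r) := by positivity
  have hαr : 4 * lam / κ ^ 2 ≤ α ^ (r - 1) := by
    have h1 : ((4 * lam / κ ^ 2) ^ ((1:ℝ) / (r - 1))) ^ (r - 1) ≤ α ^ (r - 1) :=
      Real.rpow_le_rpow (Real.rpow_nonneg (by positivity) _) hαbig hr0.le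
    rwa [← Real.rpow_mul (by positivity), one_div_mul_cancel hr0.ne', Real.rpow_one] at h1
  -- h(s) ≥ 0 for s ≥ α
  have hh : ∀ s, α ≤ s → lam * s ≤ κ ^ 2 / 4 * s ^ r := by
    intro s hs
    have hs0 : 0 < s := lt_of_lt_of_le hα hs
    have hsplit : s ^ r = s ^ (r - 1) * s := by
      rw [← Real.rpow_add_one hs0.ne' (r-1)]; ring_nf
    have h2 : α ^ (r - 1) ≤ s ^ (r - 1) := Real.rpow_le_rpow hα.le hs hr0.le
    have h3 : 4 * lam / κ ^ 2 ≤ s ^ (r - 1) := le_trans hαr h2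
    rw [hsplit]
    have h4 : 4 * lam ≤ κ ^ 2 * s ^ (r - 1) := by
      rw [div_le_iff₀ hκ2] at h3; linarith
    nlinarith [hs0.le]
  -- continuity and interior derivatives
  have hφC : ContinuousOn φ (Set.Ico 0 tstar) := fun t ht => (hd1 t ht).continuousWithinAt
  have hφ'C : ContinuousOn φ' (Set.Ico 0 tstar) := fun t ht => (hd2 t ht).continuousWithinAt
  have hdAt1 : ∀ t ∈ Set.Ioo (0:ℝ) tstar, HasDerivAt φ (φ' t) t := fun t ht =>
    (hd1 t (Set.Ioo_subset_Ico_self ht)).hasDerivAt (Ico_mem_nhds ht.1 ht.2)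
  have hdAt2 : ∀ t ∈ Set.Ioo (0:ℝ) tstar, HasDerivAt φ' (φ'' t) t := fun t ht =>
    (hd2 t (Set.Ioo_subset_Ico_self ht)).hasDerivAt (Ico_mem_nhds ht.1 ht.2)
  -- positivity of φ'
  have hpos : ∀ t ∈ Set.Ico (0:ℝ) tstar, 0 < φ' t := by
    by_contra hcon
    push_neg at hcon
    obtain ⟨t₀, ht₀I, ht₀⟩ := hcon
    set S := {t | t ∈ Set.Ico (0:ℝ) tstar ∧ φ' t ≤ 0} with hSdef
    have hS : S.Nonempty := ⟨t₀, ht₀I, ht₀⟩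
    have hbdd : BddBelow S := ⟨0, fun x hx => hx.1.1⟩
    set t₁ := sInf S with ht₁def
    have ht₁0 : 0 ≤ t₁ := le_csInf hS fun x hx => hx.1.1
    have ht₁lt : t₁ < tstar := lt_of_le_of_lt (csInf_le hbdd ⟨ht₀I, ht₀⟩) ht₀I.2
    have ht₁I : t₁ ∈ Set.Ico (0:ℝ) tstar := ⟨ht₁0, ht₁lt⟩
    have ht₁le : φ' t₁ ≤ 0 := by
      have hcl : t₁ ∈ closure S := csInf_mem_closure hS hbdd
      have hne : (𝓝[S] t₁).NeBot := mem_closure_iff_nhdsWithin_neBot.mp hcl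
      have htends : Filter.Tendsto φ' (𝓝[S] t₁) (𝓝 (φ' t₁)) :=
        (hφ'C t₁ ht₁I).mono (fun x hx => hx.1)
      exact le_of_tendsto htends (eventually_mem_nhdsWithin.mono fun x hx => hx.2)
    have hbelow : ∀ t, 0 ≤ t → t < t₁ → 0 < φ' t := by
      intro t ht0 htl
      by_contra hle
      push_neg at hle
      exact absurd (csInf_le hbdd ⟨⟨ht0, lt_trans htl ht₁lt⟩, hle⟩) (not_le.mpr htl)
    have ht₁pos : 0 < t₁ := by
      rcases ht₁0.lt_or_eq with h | h
      · exact h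
      · exfalso; rw [← h] at ht₁le; rw [hφ'0] at ht₁le; linarith
    have hsub : Set.Icc (0:ℝ) t₁ ⊆ Set.Ico 0 tstar :=
      fun x hx => ⟨hx.1, lt_of_le_of_lt hx.2 ht₁lt⟩
    have hmono : MonotoneOn φ (Set.Icc 0 t₁) := by
      apply monotoneOn_of_hasDerivWithinAt_nonneg (convex_Icc _ _) (hφC.mono hsub)
        (f' := φ')
      · intro x hx
        rw [interior_Icc] at hx
        exact ((hdAt1 x ⟨hx.1, lt_trans hx.2 ht₁lt⟩).hasDerivWithinAt)
      · intro x hx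
        rw [interior_Icc] at hx
        exact (hbelow x hx.1.le hx.2).le
    have hφα1 : ∀ x ∈ Set.Icc (0:ℝ) t₁, α ≤ φ x := by
      intro x hx
      have := hmono (Set.left_mem_Icc.mpr ht₁pos.le) hx hx.1
      rwa [hφ0] at this
    have hmono' : MonotoneOn φ' (Set.Icc 0 t₁) := by
      apply monotoneOn_of_hasDerivWithinAt_nonneg (convex_Icc _ _) (hφ'C.mono hsub)
        (f' := φ'')
      · intro x hx
        rw [interior_Icc] at hx
        exact ((hdAt2 x ⟨hx.1, lt_trans hx.2 ht₁lt⟩).hasDerivWithinAt)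
      · intro x hx
        rw [interior_Icc] at hx
        have hxI := hsub (Set.Ioo_subset_Icc_self hx)
        have h1 := hineq x hxI
        have h2 : α ≤ φ x := hφα1 x (Set.Ioo_subset_Icc_self hx)
        rw [abs_of_pos (lt_of_lt_of_le hα h2)] at h1
        have h3 := hh (φ x) h2
        linarith
    have := hmono' (Set.left_mem_Icc.mpr ht₁pos.le) (Set.right_mem_Icc.mpr ht₁pos.le) ht₁pos.le
    rw [hφ'0] at this
    linarith
  -- global monotonicity of φ and lower bound α
  have hmonoφ : MonotoneOn φ (Set.Ico 0 tstar) := by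
    apply monotoneOn_of_hasDerivWithinAt_nonneg (convex_Ico _ _) hφC (f' := φ')
    · intro x hx
      rw [interior_Ico] at hx
      exact (hdAt1 x hx).hasDerivWithinAt
    · intro x hx
      rw [interior_Ico] at hx
      exact (hpos x (Set.Ioo_subset_Ico_self hx)).le
  have hφα : ∀ t ∈ Set.Ico (0:ℝ) tstar, α ≤ φ t := by
    intro t ht
    have := hmonoφ (Set.mem_Ico.mpr ⟨le_refl 0, htpos⟩) ht ht.1
    rwa [hφ0] at this
  have hφpos : ∀ t ∈ Set.Ico (0:ℝ) tstar, 0 < φ t :=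
    fun t ht => lt_of_lt_of_le hα (hφα t ht)
  have hφ''ge : ∀ t ∈ Set.Ico (0:ℝ) tstar, κ ^ 2 / 4 * (φ t) ^ r - lam * φ t ≤ φ'' t := by
    intro t ht
    have h1 := hineq t ht
    rw [abs_of_pos (hφpos t ht)] at h1
    linarith
  -- derivative of F
  have hFd : ∀ s : ℝ, 0 < s → HasDerivAt F (κ ^ 2 / 2 * s ^ r - 2 * lam * s) s := by
    intro s hs
    have h1 : HasDerivAt (fun x : ℝ => x ^ (r + 1)) ((r + 1) * s ^ r) s := by
      have := Real.hasDerivAt_rpow_const (x := s) (p := r + 1) (Or.inl hs.ne')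
      simpa [show r + 1 - 1 = r by ring] using this
    have h2 : HasDerivAt (fun x : ℝ => lam * α ^ 2 + β ^ 2 - lam * x ^ 2)
        (-(lam * (2 * s))) s := by
      simpa using (((hasDerivAt_pow 2 s).const_mul lam).const_sub (lam * α ^ 2 + β ^ 2))
    have h3 := h2.add (((h1.sub_const (α ^ (r + 1))).const_mul (κ ^ 2 / (2 + 2 * r))))
    have h2r : (2 + 2 * r) ≠ 0 := by linarith
    have e : κ ^ 2 / (2 + 2 * r) * (r + 1) = κ ^ 2 / 2 := by
      rw [div_mul_eq_mul_div, div_eq_div_iff h2r two_ne_zero]; ring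
    refine h3.congr_deriv ?_
    linear_combination (s ^ r) * e
  have hFC : ContinuousOn F (Set.Ici α) :=
    fun x hx => ((hFd x (lt_of_lt_of_le hα hx)).continuousAt).continuousWithinAt
  have hFmono : MonotoneOn F (Set.Ici α) := by
    apply monotoneOn_of_hasDerivWithinAt_nonneg (convex_Ici _) hFC
      (f' := fun s => κ ^ 2 / 2 * s ^ r - 2 * lam * s)
    · intro x hx
      rw [interior_Ici] at hx
      exact (hFd x (lt_trans hα hx)).hasDerivWithinAt
    · intro x hx
      rw [interior_Ici] at hx
      have := hh x hx.le
      linarith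
  have hFα : F α = β ^ 2 := by simp [hFdef]
  have hFβ : ∀ s, α ≤ s → β ^ 2 ≤ F s := by
    intro s hs
    have := hFmono Set.self_mem_Ici hs hs
    rwa [hFα] at this
  have hFpos : ∀ s, α ≤ s → 0 < F s :=
    fun s hs => lt_of_lt_of_le (by positivity) (hFβ s hs)
  -- energy inequality : φ' t ^ 2 ≥ F (φ t)
  have hGmono : MonotoneOn (fun t => φ' t ^ 2 - F (φ t)) (Set.Ico 0 tstar) := by
    apply monotoneOn_of_hasDerivWithinAt_nonneg (convex_Ico _ _)
      (f' := fun t => 2 * φ' t * φ'' t - (κ ^ 2 / 2 * (φ t) ^ r - 2 * lam * (φ t)) * φ' t)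
    · exact ((hφ'C.pow 2).sub (hFC.comp hφC (fun t ht => hφα t ht)))
    · intro x hx
      rw [interior_Ico] at hx
      have hxI := Set.Ioo_subset_Ico_self hx
      have hp1 : HasDerivAt (fun t => φ' t ^ 2) (2 * φ' x * φ'' x) x := by
        simpa [mul_comm, mul_assoc, mul_left_comm] using (hdAt2 x hx).fun_pow 2
      have hp2 : HasDerivAt (fun t => F (φ t))
          ((κ ^ 2 / 2 * (φ x) ^ r - 2 * lam * (φ x)) * φ' x) x :=
        (hFd (φ x) (hφpos x hxI)).comp x (hdAt1 x hx)
      exact (hp1.sub hp2).hasDerivWithinAt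
    · intro x hx
      rw [interior_Ico] at hx
      have hxI := Set.Ioo_subset_Ico_self hx
      have h1 := hφ''ge x hxI
      have h2 := hpos x hxI
      nlinarith
  have hG : ∀ t ∈ Set.Ico (0:ℝ) tstar, F (φ t) ≤ φ' t ^ 2 := by
    intro t ht
    have := hGmono (Set.mem_Ico.mpr ⟨le_refl 0, htpos⟩) ht ht.1
    simp only [hφ0, hφ'0, hFα] at this
    linarith
  have hφ'ge : ∀ t ∈ Set.Ico (0:ℝ) tstar, Real.sqrt (F (φ t)) ≤ φ' t := by
    intro t ht
    have h1 : Real.sqrt (F (φ t)) ≤ Real.sqrt (φ' t ^ 2) := Real.sqrt_le_sqrt (hG t ht)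
    rwa [Real.sqrt_sq (hpos t ht).le] at h1
  -- key pointwise bound : 1 ≤ φ' t * g (φ t)
  have hkey : ∀ t ∈ Set.Ico (0:ℝ) tstar, 1 ≤ φ' t * g (φ t) := by
    intro t ht
    have hFp := hFpos (φ t) (hφα t ht)
    have h1 : Real.sqrt (F (φ t)) * g (φ t) ≤ φ' t * g (φ t) :=
      mul_le_mul_of_nonneg_right (hφ'ge t ht) (hgnn _)
    have h2 : Real.sqrt (F (φ t)) * g (φ t) = 1 := by
      rw [hgdef, Real.sqrt_eq_rpow, ← Real.rpow_add hFp]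
      norm_num
    linarith
  -- integrability of g on Ioi α
  have e1 : ∀ᶠ s in atTop, 4 * lam / (κ ^ 2 / (2 + 2 * r)) ≤ s ^ (r - 1) :=
    (tendsto_rpow_atTop hr0).eventually_ge_atTop _
  have e2 : ∀ᶠ s in atTop, 4 * α ^ (r + 1) ≤ s ^ (r + 1) :=
    (tendsto_rpow_atTop (by linarith : (0:ℝ) < r + 1)).eventually_ge_atTop _
  have e3 : ∀ᶠ s in atTop, max α 1 ≤ s := eventually_ge_atTop _
  obtain ⟨M₀, hM₀⟩ := Filter.eventually_atTop.mp ((e1.and e2).and e3)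
  set M := max M₀ (max α 1) with hMdef
  have hMα : α ≤ M := le_trans (le_max_left _ _) (le_max_right _ _)
  have hM1 : (1:ℝ) ≤ M := le_trans (le_max_right _ _) (le_max_right _ _)
  have hMpos : (0:ℝ) < M := lt_of_lt_of_le one_pos hM1
  have hFlow : ∀ s, M ≤ s → κ ^ 2 / (2 + 2 * r) / 2 * s ^ (r + 1) ≤ F s := by
    intro s hs
    obtain ⟨⟨p1, p2⟩, p3⟩ := hM₀ s (le_trans (le_max_left _ _) hs)
    have hs1 : (0:ℝ) < s := lt_of_lt_of_le hMpos hs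
    have hsplit : s ^ (r + 1) = s ^ (r - 1) * s ^ 2 := by
      rw [← Real.rpow_natCast s 2, ← Real.rpow_add hs1]
      congr 1
      ring
    have hb1 : lam * s ^ 2 ≤ κ ^ 2 / (2 + 2 * r) / 4 * s ^ (r + 1) := by
      rw [hsplit]
      have h5 : 4 * lam / (κ ^ 2 / (2 + 2 * r)) ≤ s ^ (r - 1) := p1
      rw [div_le_iff₀ hcpos] at h5
      nlinarith [sq_nonneg s]
    have hb2 : κ ^ 2 / (2 + 2 * r) * α ^ (r + 1) ≤ κ ^ 2 / (2 + 2 * r) / 4 * s ^ (r + 1) := by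
      nlinarith
    have hFval : F s = lam * α ^ 2 + β ^ 2 - lam * s ^ 2
        + κ ^ 2 / (2 + 2 * r) * (s ^ (r + 1) - α ^ (r + 1)) := by simp only [hFdef]
    have hq1 : 0 ≤ lam * α ^ 2 := by positivity
    have hq2 : 0 ≤ β ^ 2 := sq_nonneg β
    rw [hFval]
    linarith
  have hInt : IntegrableOn g (Set.Ioi α) := by
    have part1 : IntegrableOn g (Set.Ioc α M) := by
      have hgC : ContinuousOn g (Set.Icc α M) := by
        apply ContinuousOn.rpow_const (hFC.mono (fun x hx => hx.1))
        intro x hx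
        exact Or.inl (hFpos x hx.1).ne'
      exact (hgC.integrableOn_Icc).mono_set Set.Ioc_subset_Icc_self
    have part2 : IntegrableOn g (Set.Ioi M) := by
      have hFposM : ∀ x ∈ Set.Ioi M, 0 < F x := fun x hx => hFpos x (le_trans hMα hx.out.le)
      have hgCM : ContinuousOn g (Set.Ioi M) := by
        apply ContinuousOn.rpow_const
        · exact fun x hx => ((hFd x (lt_trans hMpos hx.out)).continuousAt).continuousWithinAt
        · exact fun x hx => Or.inl (hFposM x hx).ne'
      have hmaj : IntegrableOn
          (fun s => (κ ^ 2 / (2 + 2 * r) / 2) ^ (-(1/2) : ℝ) * s ^ ((r + 1) * (-(1/2) : ℝ)))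
          (Set.Ioi M) := by
        have hexp : (r + 1) * (-(1/2) : ℝ) < -1 := by nlinarith
        exact (integrableOn_Ioi_rpow_of_lt hexp hMpos).const_mul _
      apply Integrable.mono' hmaj (hgCM.aestronglyMeasurable measurableSet_Ioi)
      rw [ae_restrict_iff' measurableSet_Ioi]
      apply ae_of_all
      intro x hx
      have hx1 : M ≤ x := hx.out.le
      have hx0 : (0:ℝ) < x := lt_of_lt_of_le hMpos hx1
      have hchalf : (0:ℝ) < κ ^ 2 / (2 + 2 * r) / 2 := by positivity
      have hFx : (0:ℝ) < κ ^ 2 / (2 + 2 * r) / 2 * x ^ (r + 1) := by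
        have := Real.rpow_pos_of_pos hx0 (r + 1)
        positivity
      rw [Real.norm_eq_abs, abs_of_nonneg (hgnn x)]
      calc g x = F x ^ (-(1/2) : ℝ) := rfl
        _ ≤ (κ ^ 2 / (2 + 2 * r) / 2 * x ^ (r + 1)) ^ (-(1/2) : ℝ) :=
            Real.rpow_le_rpow_of_nonpos hFx (hFlow x hx1) (by norm_num)
        _ = (κ ^ 2 / (2 + 2 * r) / 2) ^ (-(1/2) : ℝ) * x ^ ((r + 1) * (-(1/2) : ℝ)) := by
            rw [Real.mul_rpow hchalf.le (Real.rpow_nonneg hx0.le _),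
              ← Real.rpow_mul hx0.le]
    apply (part1.union part2).mono_set
    intro x hx
    rcases le_or_gt x M with h | h
    · exact Or.inl ⟨hx, h⟩
    · exact Or.inr h
  -- main estimate : every t < tstar is ≤ the integral
  have hgIci : ContinuousOn g (Set.Ici α) := by
    apply ContinuousOn.rpow_const hFC
    exact fun x hx => Or.inl (hFpos x hx).ne'
  have main : ∀ t, 0 < t → t < tstar → t ≤ ∫ s in Set.Ioi α, g s := by
    intro t ht0 htl
    have htI : t ∈ Set.Ico (0:ℝ) tstar := ⟨ht0.le, htl⟩
    have hsub2 : Set.Icc (0:ℝ) t ⊆ Set.Ico 0 tstar :=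
      fun x hx => ⟨hx.1, lt_of_le_of_lt hx.2 htl⟩
    have huIcc : Set.uIcc (0:ℝ) t = Set.Icc 0 t := Set.uIcc_of_le ht0.le
    have hcov : (∫ x in (0:ℝ)..t, φ' x • (g ∘ φ) x) = ∫ u in (φ 0)..(φ t), g u := by
      apply intervalIntegral.integral_comp_smul_deriv''
      · rw [huIcc]; exact hφC.mono hsub2
      · intro x hx
        rw [min_eq_left ht0.le, max_eq_right ht0.le] at hx
        exact (hdAt1 x ⟨hx.1, lt_trans hx.2 htl⟩).hasDerivWithinAt.mono
          (fun y hy => hy)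
      · rw [huIcc]; exact hφ'C.mono hsub2
      · apply hgIci.mono
        rintro y ⟨x, hx, rfl⟩
        rw [huIcc] at hx
        exact hφα x (hsub2 hx)
    have hcont : ContinuousOn (fun x => φ' x • (g ∘ φ) x) (Set.uIcc (0:ℝ) t) := by
      rw [huIcc]
      exact (hφ'C.mono hsub2).smul ((hgIci.comp (hφC.mono hsub2))
        (fun x hx => hφα x (hsub2 hx)))
    have hstep1 : t ≤ ∫ x in (0:ℝ)..t, φ' x • (g ∘ φ) x := by
      have h1 : (∫ x in (0:ℝ)..t, (1:ℝ)) = t := by simp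
      have h2 : (∫ x in (0:ℝ)..t, (1:ℝ)) ≤ ∫ x in (0:ℝ)..t, φ' x • (g ∘ φ) x := by
        apply intervalIntegral.integral_mono_on ht0.le intervalIntegrable_const
          hcont.intervalIntegrable
        intro x hx
        exact hkey x (hsub2 hx)
      rwa [h1] at h2
    have hφtα : α ≤ φ t := hφα t htI
    have hstep2 : (∫ u in (φ 0)..(φ t), g u) ≤ ∫ s in Set.Ioi α, g s := by
      rw [hφ0, intervalIntegral.integral_of_le hφtα]
      apply setIntegral_mono_set hInt (ae_of_all _ hgnn)
      exact HasSubset.Subset.eventuallyLE Set.Ioc_subset_Ioi_self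
    calc t ≤ ∫ x in (0:ℝ)..t, φ' x • (g ∘ φ) x := hstep1
      _ = ∫ u in (φ 0)..(φ t), g u := hcov
      _ ≤ ∫ s in Set.Ioi α, g s := hstep2
  by_contra hcon
  push_neg at hcon
  set J := ∫ s in Set.Ioi α, g s with hJ
  have h1 : max J 0 < tstar := max_lt hcon htpos
  set t := (max J 0 + tstar) / 2 with htdef
  have ht0 : 0 < t := by
    have : (0:ℝ) ≤ max J 0 := le_max_right _ _
    rw [htdef]; linarith
  have htl : t < tstar := by rw [htdef]; linarith
  have h2 : J < t := by
    have : J ≤ max J 0 := le_max_left _ _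
    rw [htdef]; linarith
  exact absurd (main t ht0 htl) (not_le.mpr h2)
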